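/- Let R be a commutative ring and let φ be an n × n matrix over R. Then the following are equivalent: (1) φ ∈ J^#(M_n(R)); (2) the characteristic polynomial χ(φ) = det(tI_n − φ) is congruent to t^n modulo J(R), i.e., χ(φ) − t^n has all coefficients in J(R); (3) there exists a monic polynomial h ∈ R[t] such that h ≡ t^{deg h} modulo J(R) (i.e., all coefficients of h other than the leading one lie in J(R)) and h(φ) = 0. -/

import Mathlib

open Polynomial

universe u

/-- The Jacobson radical of a ring: the intersection of all maximal (left) ideals. -/
def jacobsonRadical (R : Type*) [Ring R] : Ideal R := Ideal.jacobson (⊥ : Ideal R)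

/-- `J^#(R) = {x ∈ R : x ^ n ∈ J(R) for some n ∈ ℕ}`. -/
def Jsharp (R : Type*) [Ring R] : Set R :=
  {x | ∃ n : ℕ, 0 < n ∧ x ^ n ∈ jacobsonRadical R}

/-- An element `a` is strongly `J^#`-clean if `a = e + u` with `e` idempotent,
`u ∈ J^#(R)` and `e * a = a * e`. -/
def IsStronglyJsharpClean {R : Type*} [Ring R] (a : R) : Prop :=
  ∃ e : R, IsIdempotentElem e ∧ a - e ∈ Jsharp R ∧ e * a = a * e

/-- A commutative ring is projective-free if every finitely generated projective
module is free. -/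
def IsProjectiveFree (R : Type u) [CommRing R] : Prop :=
  ∀ (M : Type u) [AddCommGroup M] [Module R M],
    Module.Finite R M → Module.Projective R M → Module.Free R M

/-- `𝕁_r`: monic polynomials congruent to `(t - r) ^ deg f` modulo `J^#(R)`. -/
def Jpoly {R : Type*} [CommRing R] (r : R) : Set R[X] :=
  {f | f.Monic ∧ ∀ i, (f - (X - C r) ^ f.natDegree).coeff i ∈ Jsharp R}


/-- Bridge between the left-ideal Jacobson radical and the two-sided one. -/
lemma mem_jacobsonRadical_iff_twoSided {S : Type*} [Ring S] (x : S) :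
    x ∈ jacobsonRadical S ↔ x ∈ (⊥ : TwoSidedIdeal S).jacobson := by
  have hb : TwoSidedIdeal.asIdeal (⊥ : TwoSidedIdeal S) = ⊥ := by
    ext y; simp [TwoSidedIdeal.mem_asIdeal]
  rw [jacobsonRadical, ← hb, ← TwoSidedIdeal.asIdeal_jacobson, TwoSidedIdeal.mem_asIdeal]

/-- A matrix is in the Jacobson radical of the matrix ring iff all its entries are
in the Jacobson radical of the base ring. -/
lemma mem_jacobsonRadical_matrix_iff {R : Type*} [CommRing R] {n : ℕ}
    (M : Matrix (Fin n) (Fin n) R) :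
    M ∈ jacobsonRadical (Matrix (Fin n) (Fin n) R) ↔ ∀ i j, M i j ∈ jacobsonRadical R := by
  rw [mem_jacobsonRadical_iff_twoSided, ← TwoSidedIdeal.matrix_jacobson_bot,
    TwoSidedIdeal.mem_matrix]
  simp_rw [mem_jacobsonRadical_iff_twoSided]

lemma aeval_entry_mem {R : Type*} [CommRing R] {n : ℕ} (φ : Matrix (Fin n) (Fin n) R)
    (p : R[X]) (hp : ∀ i, p.coeff i ∈ jacobsonRadical R) (i j : Fin n) :
    (Polynomial.aeval φ p) i j ∈ jacobsonRadical R := by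
  rw [Polynomial.aeval_eq_sum_range]
  simp only [Matrix.sum_apply, Matrix.smul_apply, smul_eq_mul]
  exact Submodule.sum_mem _ fun k _ => Ideal.mul_mem_right _ _ (hp k)

/-- for a matrix `φ` over a commutative ring, `φ ∈ J^#(M_n(R))` iff
`χ(φ) ≡ t ^ n (mod J(R))` iff `φ` satisfies some monic `h` with `h ≡ t ^ deg h (mod J(R))`. -/
theorem mem_Jsharp_matrix_iff {R : Type*} [CommRing R] {n : ℕ}
    (φ : Matrix (Fin n) (Fin n) R) :
    (φ ∈ Jsharp (Matrix (Fin n) (Fin n) R) ↔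
      ∀ i, (φ.charpoly - X ^ n).coeff i ∈ jacobsonRadical R) ∧
    (φ ∈ Jsharp (Matrix (Fin n) (Fin n) R) ↔
      ∃ h : R[X], h.Monic ∧ (∀ i, (h - X ^ h.natDegree).coeff i ∈ jacobsonRadical R) ∧
        Polynomial.aeval φ h = 0) := by
  have h12 : φ ∈ Jsharp (Matrix (Fin n) (Fin n) R) →
      ∀ i, (φ.charpoly - X ^ n).coeff i ∈ jacobsonRadical R := by
    rintro ⟨m, hm0, hmem⟩ i
    rw [jacobsonRadical, Ideal.jacobson, Submodule.mem_sInf]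
    rintro J ⟨-, hJmax⟩
    haveI := hJmax
    haveI := Ideal.IsMaximal.isPrime hJmax
    set f := Ideal.Quotient.mk J with hf
    set ψ := φ.map f with hψdef
    have hentries := (mem_jacobsonRadical_matrix_iff _).mp hmem
    have hψm : ψ ^ m = 0 := by
      have : ψ ^ m = (φ ^ m).map f := by
        simp only [hψdef, ← RingHom.mapMatrix_apply, ← map_pow]
      rw [this]
      ext a b
      simp only [Matrix.map_apply, Matrix.zero_apply]
      rw [Ideal.Quotient.eq_zero_iff_mem]
      have hle : jacobsonRadical R ≤ J := by
        rw [jacobsonRadical, Ideal.jacobson]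
        exact sInf_le ⟨bot_le, hJmax⟩
      exact hle (hentries a b)
    have hnil : IsNilpotent ψ := ⟨m, hψm⟩
    have hc := Matrix.isNilpotent_charpoly_sub_pow_of_isNilpotent hnil
    have hzero : ψ.charpoly - X ^ (Fintype.card (Fin n)) = 0 := hc.eq_zero
    have hmap : (φ.charpoly - X ^ n).map f = 0 := by
      rw [Polynomial.map_sub, Polynomial.map_pow, Polynomial.map_X,
        ← Matrix.charpoly_map]
      simpa [Fintype.card_fin] using hzero
    have := congrArg (fun p => Polynomial.coeff p i) hmap
    simp only [Polynomial.coeff_map, Polynomial.coeff_zero] at this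
    exact Ideal.Quotient.eq_zero_iff_mem.mp this
  have h31 : (∃ h : R[X], h.Monic ∧
      (∀ i, (h - X ^ h.natDegree).coeff i ∈ jacobsonRadical R) ∧
        Polynomial.aeval φ h = 0) → φ ∈ Jsharp (Matrix (Fin n) (Fin n) R) := by
    rintro ⟨h, hmon, hco, hev⟩
    refine ⟨h.natDegree + 1, Nat.succ_pos _, ?_⟩
    have key : φ ^ h.natDegree = Polynomial.aeval φ (X ^ h.natDegree - h) := by
      rw [map_sub, hev, sub_zero, map_pow, Polynomial.aeval_X]
    have hco' : ∀ i, (X ^ h.natDegree - h).coeff i ∈ jacobsonRadical R := by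
      intro i
      rw [← neg_sub, Polynomial.coeff_neg]
      exact neg_mem (hco i)
    have hd : φ ^ h.natDegree ∈ jacobsonRadical (Matrix (Fin n) (Fin n) R) := by
      rw [mem_jacobsonRadical_matrix_iff, key]
      exact aeval_entry_mem φ _ hco'
    rw [pow_succ']
    exact Ideal.mul_mem_left _ φ hd
  have h23 : (∀ i, (φ.charpoly - X ^ n).coeff i ∈ jacobsonRadical R) →
      (∃ h : R[X], h.Monic ∧
        (∀ i, (h - X ^ h.natDegree).coeff i ∈ jacobsonRadical R) ∧
          Polynomial.aeval φ h = 0) := by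
    intro hc
    rcases subsingleton_or_nontrivial R with hR | hR
    · refine ⟨1, Polynomial.monic_one, fun i => ?_, Subsingleton.elim _ _⟩
      have h0 : ((1 : R[X]) - X ^ (1 : R[X]).natDegree).coeff i = 0 := Subsingleton.elim _ _
      rw [h0]
      exact zero_mem _
    · refine ⟨φ.charpoly, φ.charpoly_monic, ?_, φ.aeval_self_charpoly⟩
      rwa [Matrix.charpoly_natDegree_eq_dim, Fintype.card_fin]
  exact ⟨⟨h12, fun hc => h31 (h23 hc)⟩, ⟨fun hφ => h23 (h12 hφ), h31⟩⟩
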